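/- Every selective Fσ ideal on ℕ is uniformly selective. -/

import Mathlib

open Set

/-- The Cantor space `2^ℕ`: subsets of `ℕ` identified with their characteristic functions. -/
abbrev Cantor : Type := ℕ → Bool

/-- The subset of `ℕ` coded by a point of Cantor space. -/
def toSet (x : Cantor) : Set ℕ := {n | x n = true}

/-- `s ⊑ z` : the finite set `s` is an initial segment of `z ⊆ ℕ`,
i.e. `s = z ∩ {0,1,…,n}` for some `n`. -/
def InitSeg (s : Finset ℕ) (z : Set ℕ) : Prop := ∃ n : ℕ, (s : Set ℕ) = z ∩ Set.Iic n

/-- `s ⊑ t` for finite sets `s, t`. -/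
def InitSegF (s t : Finset ℕ) : Prop := ∃ n : ℕ, s = t ∩ Finset.Iic n

/-- `B` is a front on the set `x ⊆ ℕ`: all members of `B` are subsets of `x`, any two
members of `B` are `⊑`-incomparable, and every infinite subset of `x` has an initial
segment in `B`. -/
def IsFrontOn (B : Set (Finset ℕ)) (x : Set ℕ) : Prop :=
  (∀ s ∈ B, (s : Set ℕ) ⊆ x) ∧
  (∀ s ∈ B, ∀ t ∈ B, InitSegF s t → s = t) ∧
  (∀ y : Set ℕ, y ⊆ x → y.Infinite → ∃ s ∈ B, InitSeg s y)

/-- `y` is `F`-homogeneous: either every infinite subset of `y` has an initial segment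
in `F`, or no finite subset of `y` belongs to `F`. -/
def Homog (F : Set (Finset ℕ)) (y : Set ℕ) : Prop :=
  (∀ z : Set ℕ, z ⊆ y → z.Infinite → ∃ s ∈ F, InitSeg s z) ∨
  (∀ s : Finset ℕ, (s : Set ℕ) ⊆ y → s ∉ F)

/-- `I` is an ideal on `ℕ`: a family of subsets of `ℕ` closed under taking subsets
and under finite unions. -/
def IsIdeal (I : Set Cantor) : Prop :=
  (∀ x ∈ I, ∀ y : Cantor, toSet y ⊆ toSet x → y ∈ I) ∧
  (∀ x ∈ I, ∀ y ∈ I, (fun n => x n || y n) ∈ I)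

/-- `I` is an `Fσ` subset of the Cantor space. -/
def IsFsigma (I : Set Cantor) : Prop :=
  ∃ C : ℕ → Set Cantor, (∀ n, IsClosed (C n)) ∧ I = ⋃ n, C n

/-- A family `C` is tall if every infinite subset of `ℕ` contains an infinite member of `C`. -/
def Tall (C : Set Cantor) : Prop :=
  ∀ x : Cantor, (toSet x).Infinite → ∃ y ∈ C, (toSet y).Infinite ∧ toSet y ⊆ toSet x

/-- `S` is a Borel selector for the family `C`. -/
def IsSelector (C : Set Cantor) (S : Cantor → Cantor) : Prop :=
  Measurable S ∧ ∀ x : Cantor,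
    toSet (S x) ⊆ toSet x ∧ ((toSet x).Infinite → (toSet (S x)).Infinite) ∧ S x ∈ C

/-- A Borel ideal `I` is uniformly selective. -/
def UnifSelective (I : Set Cantor) : Prop :=
  ∃ F : (ℕ → Cantor) → Cantor, Measurable F ∧
    ∀ xs : ℕ → Cantor, (∀ n, xs n ∉ I) → (∀ n, toSet (xs (n + 1)) ⊆ toSet (xs n)) →
      F xs ∉ I ∧ ∀ n ∈ toSet (F xs), toSet (F xs) \ Set.Iic n ⊆ toSet (xs n)

/-- A Borel ideal `I` is uniformly `p⁺`. -/
def UnifPplus (I : Set Cantor) : Prop :=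
  ∃ G : (ℕ → Cantor) → Cantor, Measurable G ∧
    ∀ xs : ℕ → Cantor, (∀ n, xs n ∉ I) → (∀ n, toSet (xs (n + 1)) ⊆ toSet (xs n)) →
      G xs ∉ I ∧ ∀ n, (toSet (G xs) \ toSet (xs n)).Finite

/-- `(t n)_{n∈ℕ}` is a partition of `x` into finite sets. -/
def FinPartition (x : Cantor) (t : ℕ → Cantor) : Prop :=
  (∀ n, (toSet (t n)).Finite) ∧
  (∀ m n, m ≠ n → Disjoint (toSet (t m)) (toSet (t n))) ∧
  (⋃ n, toSet (t n)) = toSet x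

/-- A Borel ideal `I` is uniformly `q⁺`. -/
def UnifQplus (I : Set Cantor) : Prop :=
  ∃ F : Cantor × (ℕ → Cantor) → Cantor, Measurable F ∧
    ∀ (x : Cantor) (t : ℕ → Cantor), x ∉ I → FinPartition x t →
      toSet (F (x, t)) ⊆ toSet x ∧ F (x, t) ∉ I ∧
      ∀ n, (toSet (F (x, t)) ∩ toSet (t n)).Subsingleton

/-- The ideal `I` is `q⁺`. -/
def Qplus (I : Set Cantor) : Prop :=
  ∀ (x : Cantor) (t : ℕ → Cantor), x ∉ I → FinPartition x t →
    ∃ y : Cantor, toSet y ⊆ toSet x ∧ y ∉ I ∧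
      ∀ n, (toSet y ∩ toSet (t n)).Subsingleton

/-- The ideal `I` is selective. -/
def Selective (I : Set Cantor) : Prop :=
  ∀ xs : ℕ → Cantor, (∀ n, xs n ∉ I) → (∀ n, toSet (xs (n + 1)) ⊆ toSet (xs n)) →
    ∃ x : Cantor, x ∉ I ∧ ∀ n ∈ toSet x, toSet x \ Set.Iic n ⊆ toSet (xs n)

/-- The ideal generated by `K`: `x ∈ IdealGen K` iff `x ⊆ y₁ ∪ … ∪ y_n` for some
`y₁, …, y_n ∈ K`. -/
def IdealGen (K : Set Cantor) : Set Cantor :=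
  {x | ∃ l : List Cantor, l ≠ [] ∧ (∀ y ∈ l, y ∈ K) ∧ toSet x ⊆ ⋃ y ∈ l, toSet y}

/-- `↓K = {x : x ⊆ y for some y ∈ K}`. -/
def Down (K : Set Cantor) : Set Cantor := {x | ∃ y ∈ K, toSet x ⊆ toSet y}

/-- `C` is hereditary: closed under taking subsets. -/
def Hereditary (C : Set Cantor) : Prop :=
  ∀ x ∈ C, ∀ y : Cantor, toSet y ⊆ toSet x → y ∈ C

/-- `A ⊆ 2^ℕ` is `Σ¹₂`: the projection of a coanalytic subset of `2^ℕ × ℕ^ℕ`. -/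
def Sigma12 (A : Set Cantor) : Prop :=
  ∃ C : Set (Cantor × (ℕ → ℕ)), MeasureTheory.AnalyticSet Cᶜ ∧
    A = {x | ∃ w : ℕ → ℕ, (x, w) ∈ C}

/-- `A ⊆ 2^ℕ` is `Π¹₂`: the complement of a `Σ¹₂` set. -/
def Pi12 (A : Set Cantor) : Prop := Sigma12 Aᶜ

namespace SelUnif

open Classical in
/-- characteristic function of a finite set -/
noncomputable def chF (s : Finset ℕ) : Cantor := fun n => if n ∈ s then true else false

open Classical in
/-- characteristic function of a set -/
noncomputable def chS (c : Set ℕ) : Cantor := fun n => if n ∈ c then true else false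

open Classical in
lemma toSet_chF (s : Finset ℕ) : toSet (chF s) = ↑s := by
  ext n; simp [toSet, chF]

open Classical in
lemma toSet_chS (c : Set ℕ) : toSet (chS c) = c := by
  ext n; simp [toSet, chS]

/-- decode a natural number into a finite set -/
def dec (e : ℕ) : Finset ℕ := (Encodable.decode (α := Finset ℕ) e).getD ∅

lemma dec_encode (s : Finset ℕ) : dec (Encodable.encode s) = s := by
  simp [dec, Encodable.encodek]

/-- `dec e` is a suitable next "chunk" of the diagonal set being built. -/
def Good (K : ℕ → Set Cantor) (xs : ℕ → Cantor) (a m e : ℕ) : Prop :=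
  (dec e).Nonempty ∧ (∀ b ∈ dec e, a < b) ∧ (∀ b ∈ dec e, xs a b = true) ∧
  (∀ b ∈ dec e, ∀ b' ∈ dec e, b < b' → xs b b' = true) ∧ chF (dec e) ∉ K m

noncomputable def pick (K : ℕ → Set Cantor) (xs : ℕ → Cantor) (a m : ℕ) : ℕ :=
  sInf {e | Good K xs a m e}

noncomputable def endpt (K : ℕ → Set Cantor) (xs : ℕ → Cantor) : ℕ → ℕ
  | 0 => 0
  | m+1 => (if h : (dec (pick K xs (endpt K xs m) m)).Nonempty
      then (dec (pick K xs (endpt K xs m) m)).max' h else 0).max (endpt K xs m + 1)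

open Classical in
noncomputable def Fsel (K : ℕ → Set Cantor) (xs : ℕ → Cantor) : Cantor :=
  fun n => if ∃ m, n ∈ dec (pick K xs (endpt K xs m) m) then true else false

lemma Fsel_eq_true (K : ℕ → Set Cantor) (xs : ℕ → Cantor) (n : ℕ) :
    Fsel K xs n = true ↔ ∃ m, n ∈ dec (pick K xs (endpt K xs m) m) := by
  by_cases h : ∃ m, n ∈ dec (pick K xs (endpt K xs m) m) <;> simp [Fsel, h]

/-! ### Measurability -/

lemma meas_nat {α : Type*} [MeasurableSpace α] {f : α → ℕ}
    (h : ∀ v, MeasurableSet {x | f x = v}) : Measurable f := by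
  apply measurable_to_countable'
  intro v
  have : f ⁻¹' {v} = {x | f x = v} := by ext x; simp
  rw [this]; exact h v

lemma comp_nat {α : Type*} [MeasurableSpace α] {f : α → ℕ} (hf : Measurable f)
    (g : ℕ → α → ℕ) (hg : ∀ a, Measurable (g a)) : Measurable fun x => g (f x) x := by
  apply meas_nat
  intro v
  have : {x | g (f x) x = v} = ⋃ a, ({x | f x = a} ∩ {x | g a x = v}) := by
    ext x; simp only [Set.mem_setOf_eq, Set.mem_iUnion, Set.mem_inter_iff]
    constructor
    · intro hx; exact ⟨f x, rfl, hx⟩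
    · rintro ⟨a, ha, hx⟩; rw [ha]; exact hx
  rw [this]
  exact MeasurableSet.iUnion fun a =>
    ((hf (measurableSet_singleton a)).inter (hg a (measurableSet_singleton v)))

lemma meas_coord (a b : ℕ) : MeasurableSet {xs : ℕ → Cantor | xs a b = true} := by
  have : {xs : ℕ → Cantor | xs a b = true} = (fun xs : ℕ → Cantor => xs a b) ⁻¹' {true} := by
    ext xs; simp
  rw [this]
  exact ((measurable_pi_apply b).comp (measurable_pi_apply a)) (measurableSet_singleton true)

lemma meas_good (K : ℕ → Set Cantor) (a m e : ℕ) :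
    MeasurableSet {xs : ℕ → Cantor | Good K xs a m e} := by
  have : {xs : ℕ → Cantor | Good K xs a m e} =
      ({xs : ℕ → Cantor | (dec e).Nonempty ∧ (∀ b ∈ dec e, a < b) ∧ chF (dec e) ∉ K m} ∩
       (⋂ b ∈ dec e, {xs : ℕ → Cantor | xs a b = true})) ∩
      (⋂ b ∈ dec e, ⋂ b' ∈ dec e, {xs : ℕ → Cantor | b < b' → xs b b' = true}) := by
    ext xs
    simp only [Good, Set.mem_inter_iff, Set.mem_setOf_eq, Set.mem_iInter]
    tauto
  rw [this]
  refine MeasurableSet.inter (MeasurableSet.inter ?_ ?_) ?_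
  · by_cases h : (dec e).Nonempty ∧ (∀ b ∈ dec e, a < b) ∧ chF (dec e) ∉ K m
    · have : {xs : ℕ → Cantor | (dec e).Nonempty ∧ (∀ b ∈ dec e, a < b) ∧ chF (dec e) ∉ K m}
          = Set.univ := by
        ext xs; simp only [Set.mem_setOf_eq, Set.mem_univ, iff_true]; exact h
      rw [this]; exact MeasurableSet.univ
    · have : {xs : ℕ → Cantor | (dec e).Nonempty ∧ (∀ b ∈ dec e, a < b) ∧ chF (dec e) ∉ K m}
          = ∅ := by ext xs; simp only [Set.mem_setOf_eq, Set.mem_empty_iff_false]; tauto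
      rw [this]; exact MeasurableSet.empty
  · exact MeasurableSet.biInter (Set.to_countable _) fun b _ => meas_coord a b
  · refine MeasurableSet.biInter (Set.to_countable _) fun b _ => ?_
    refine MeasurableSet.biInter (Set.to_countable _) fun b' _ => ?_
    by_cases hbb : b < b'
    · have : {xs : ℕ → Cantor | b < b' → xs b b' = true}
          = {xs : ℕ → Cantor | xs b b' = true} := by ext xs; simp [hbb]
      rw [this]; exact meas_coord b b'
    · have : {xs : ℕ → Cantor | b < b' → xs b b' = true} = Set.univ := by
        ext xs; simp [hbb]
      rw [this]; exact MeasurableSet.univ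

lemma nat_sInf_eq (S : Set ℕ) (v : ℕ) :
    sInf S = v ↔ (v ∈ S ∧ ∀ k < v, k ∉ S) ∨ (v = 0 ∧ ∀ k, k ∉ S) := by
  constructor
  · intro h
    by_cases hS : S.Nonempty
    · left
      refine ⟨h ▸ Nat.sInf_mem hS, fun k hk => Nat.notMem_of_lt_sInf (h ▸ hk)⟩
    · right
      rw [Set.not_nonempty_iff_eq_empty] at hS
      subst hS
      rw [Nat.sInf_empty] at h
      exact ⟨h.symm, fun k => id⟩
  · rintro (⟨hv, hmin⟩ | ⟨rfl, hemp⟩)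
    · refine le_antisymm (Nat.sInf_le hv) ?_
      by_contra hlt
      push_neg at hlt
      exact hmin _ hlt (Nat.sInf_mem ⟨v, hv⟩)
    · have : S = ∅ := Set.eq_empty_iff_forall_notMem.2 hemp
      rw [this, Nat.sInf_empty]

lemma meas_pick (K : ℕ → Set Cantor) (a m : ℕ) :
    Measurable fun xs : ℕ → Cantor => pick K xs a m := by
  apply meas_nat
  intro v
  have : {xs : ℕ → Cantor | pick K xs a m = v} =
      (({xs : ℕ → Cantor | Good K xs a m v} ∩
        ⋂ k ∈ Finset.range v, {xs : ℕ → Cantor | Good K xs a m k}ᶜ)) ∪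
      ((if v = 0 then Set.univ else (∅ : Set (ℕ → Cantor))) ∩
        ⋂ k : ℕ, {xs : ℕ → Cantor | Good K xs a m k}ᶜ) := by
    ext xs
    simp only [pick, Set.mem_setOf_eq, Set.mem_union, Set.mem_inter_iff, Set.mem_iInter,
      Set.mem_compl_iff, Finset.mem_range]
    rw [nat_sInf_eq]
    constructor
    · rintro (⟨h1, h2⟩ | ⟨h1, h2⟩)
      · exact Or.inl ⟨h1, fun k hk => h2 k hk⟩
      · refine Or.inr ⟨?_, fun k => h2 k⟩
        simp [h1]
    · rintro (⟨h1, h2⟩ | ⟨h1, h2⟩)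
      · exact Or.inl ⟨h1, fun k hk => h2 k hk⟩
      · refine Or.inr ⟨?_, fun k => h2 k⟩
        by_cases hv : v = 0
        · exact hv
        · simp [hv] at h1
  rw [this]
  refine MeasurableSet.union ?_ ?_
  · exact (meas_good K a m v).inter
      (MeasurableSet.biInter (Set.to_countable _) fun k _ => (meas_good K a m k).compl)
  · refine MeasurableSet.inter ?_ (MeasurableSet.iInter fun k => (meas_good K a m k).compl)
    split <;> simp

lemma meas_endpt (K : ℕ → Set Cantor) (m : ℕ) :
    Measurable fun xs : ℕ → Cantor => endpt K xs m := by
  induction m with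
  | zero => exact measurable_const
  | succ m ih =>
    exact comp_nat ih (fun a xs' => ((if h : (dec (pick K xs' a m)).Nonempty
        then (dec (pick K xs' a m)).max' h else 0).max (a + 1)))
      (fun a => (measurable_from_top (f := fun e : ℕ => ((if h : (dec e).Nonempty
        then (dec e).max' h else 0).max (a + 1)))).comp (meas_pick K a m))

lemma meas_pickAt (K : ℕ → Set Cantor) (m : ℕ) :
    Measurable fun xs : ℕ → Cantor => pick K xs (endpt K xs m) m :=
  comp_nat (meas_endpt K m) (fun a xs => pick K xs a m) (fun a => meas_pick K a m)

lemma meas_Fsel (K : ℕ → Set Cantor) : Measurable (Fsel K) := by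
  rw [measurable_pi_iff]
  intro n
  apply measurable_to_countable'
  intro b
  have htrue : (fun xs : ℕ → Cantor => Fsel K xs n) ⁻¹' {true} =
      ⋃ m, (fun xs : ℕ → Cantor => pick K xs (endpt K xs m) m) ⁻¹' {e | n ∈ dec e} := by
    ext xs
    simp only [Set.mem_preimage, Set.mem_singleton_iff, Fsel_eq_true, Set.mem_iUnion,
      Set.mem_setOf_eq]
  have hmt : MeasurableSet ((fun xs : ℕ → Cantor => Fsel K xs n) ⁻¹' {true}) := by
    rw [htrue]
    exact MeasurableSet.iUnion fun m => (meas_pickAt K m) trivial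
  cases b
  · have : (fun xs : ℕ → Cantor => Fsel K xs n) ⁻¹' {false} =
        ((fun xs : ℕ → Cantor => Fsel K xs n) ⁻¹' {true})ᶜ := by
      ext xs
      simp only [Set.mem_preimage, Set.mem_singleton_iff, Set.mem_compl_iff]
      cases h : Fsel K xs n <;> simp
    rw [this]; exact hmt.compl
  · exact hmt

end SelUnif
namespace SelUnif

lemma toSet_or (x y : Cantor) : toSet (fun n => x n || y n) = toSet x ∪ toSet y := by
  ext n; simp [toSet]

lemma toSet_mono (xs : ℕ → Cantor) (hdec : ∀ n, toSet (xs (n+1)) ⊆ toSet (xs n))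
    {i j : ℕ} (hij : i ≤ j) : toSet (xs j) ⊆ toSet (xs i) := by
  induction j with
  | zero => simp_all
  | succ j ihj =>
    rcases Nat.lt_or_ge i (j+1) with h | h
    · exact (hdec j).trans (ihj (Nat.lt_succ_iff.mp h))
    · have : i = j + 1 := le_antisymm hij h
      subst this; exact subset_rfl

/-- `Down` of a closed set is closed. -/
lemma down_closed {K : Set Cantor} (hK : IsClosed K) : IsClosed (Down K) := by
  have himg : Down K = Prod.fst ''
      {p : Cantor × Cantor | (∀ n, p.1 n = true → p.2 n = true) ∧ p.2 ∈ K} := by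
    ext x
    constructor
    · rintro ⟨y, hy, hxy⟩
      exact ⟨(x, y), ⟨fun n hn => hxy hn, hy⟩, rfl⟩
    · rintro ⟨⟨x', y⟩, ⟨hsub, hy⟩, rfl⟩
      exact ⟨y, hy, fun n hn => hsub n hn⟩
  rw [himg]
  have hclosed : IsClosed {p : Cantor × Cantor | (∀ n, p.1 n = true → p.2 n = true) ∧ p.2 ∈ K} := by
    have part1 : IsClosed {p : Cantor × Cantor | ∀ n, p.1 n = true → p.2 n = true} := by
      have : {p : Cantor × Cantor | ∀ n, p.1 n = true → p.2 n = true} =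
          ⋂ n, ((fun p : Cantor × Cantor => p.1 n) ⁻¹' {false} ∪
                (fun p : Cantor × Cantor => p.2 n) ⁻¹' {true}) := by
        ext p
        simp only [Set.mem_setOf_eq, Set.mem_iInter, Set.mem_union, Set.mem_preimage,
          Set.mem_singleton_iff]
        refine forall_congr' fun n => ?_
        cases h1 : p.1 n <;> cases h2 : p.2 n <;> simp
      rw [this]
      refine isClosed_iInter fun n => IsClosed.union ?_ ?_
      · exact IsClosed.preimage ((continuous_apply n).comp continuous_fst) isClosed_singleton
      · exact IsClosed.preimage ((continuous_apply n).comp continuous_snd) isClosed_singleton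
    have part2 : IsClosed {p : Cantor × Cantor | p.2 ∈ K} :=
      IsClosed.preimage continuous_snd hK
    exact part1.inter part2
  exact (hclosed.isCompact.image continuous_fst).isClosed

/-- In case all singletons belong to the ideal, all points with finite `toSet` do. -/
lemma finite_mem {I : Set Cantor} (hI : IsIdeal I) (hA : ∀ k : ℕ, chF {k} ∈ I)
    (y : Cantor) (hy : (toSet y).Finite) : y ∈ I := by
  have main : ∀ s : Finset ℕ, ∀ z : Cantor, toSet z ⊆ ↑s → z ∈ I := by
    intro s
    induction s using Finset.induction_on with
    | empty =>
      intro z hz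
      refine hI.1 (chF {0}) (hA 0) z ?_
      rw [toSet_chF]
      intro n hn
      exact absurd (hz hn) (by simp)
    | insert a s hnotmem ih =>
      intro z hz
      have h1 : chF s ∈ I := ih (chF s) (by rw [toSet_chF])
      have h2 : (fun n => chF {a} n || chF s n) ∈ I := hI.2 _ (hA a) _ h1
      refine hI.1 _ h2 z ?_
      rw [toSet_or, toSet_chF, toSet_chF]
      intro n hn
      have := hz hn
      simp only [Finset.coe_insert, Set.mem_insert_iff] at this
      rcases this with rfl | hns
      · exact Or.inl (by simp)
      · exact Or.inr hns
  exact main hy.toFinset y (by rw [Set.Finite.coe_toFinset])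

/-- Key lemma: under selectivity, a good next chunk always exists. -/
lemma good_exists {I : Set Cantor} (C : ℕ → Set Cantor) (hI : IsIdeal I)
    (hC : ∀ m, IsClosed (C m)) (hcov : ∀ m, C m ⊆ I) (hsel : Selective I)
    (hfin : ∀ y : Cantor, (toSet y).Finite → y ∈ I)
    (xs : ℕ → Cantor) (hxs : ∀ n, xs n ∉ I) (hdec : ∀ n, toSet (xs (n+1)) ⊆ toSet (xs n))
    (a m : ℕ) : ∃ e, Good (fun i => Down (C i)) xs a m e := by
  classical
  set xs' : ℕ → Cantor := fun n => xs (max n a) with hxs'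
  obtain ⟨x, hx1, hx2⟩ := hsel xs' (fun n => hxs (max n a))
    (fun n => toSet_mono xs hdec (max_le_max (Nat.le_succ n) le_rfl))
  have hx_inf : (toSet x).Infinite := by
    intro hfin'
    exact hx1 (hfin x hfin')
  obtain ⟨n0, hn0x, hn0gt⟩ : ∃ n0 ∈ toSet x, a < n0 := hx_inf.exists_gt a
  set c : Set ℕ := toSet x \ Set.Iic n0 with hc
  have hc_inf : c.Infinite := hx_inf.diff (Set.finite_Iic n0)
  have hc_sub : ∀ b ∈ c, xs a b = true := by
    intro b hb
    have h1 : b ∈ toSet (xs' n0) := hx2 n0 hn0x hb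
    have h2 : max n0 a = n0 := max_eq_left hn0gt.le
    rw [hxs'] at h1
    simp only [h2] at h1
    exact toSet_mono xs hdec hn0gt.le h1
  have hc_gt : ∀ b ∈ c, a < b := by
    intro b hb
    have : ¬ b ≤ n0 := hb.2
    omega
  have hc_pairs : ∀ b ∈ c, ∀ b' ∈ c, b < b' → xs b b' = true := by
    intro b hb b' hb' hlt
    have h1 : b' ∈ toSet (xs' b) := hx2 b hb.1 ⟨hb'.1, by simpa using hlt.not_ge⟩
    have h2 : max b a = b := max_eq_left (hc_gt b hb).le
    rw [hxs'] at h1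
    simpa only [h2, toSet, Set.mem_setOf_eq] using h1
  by_contra hno
  push_neg at hno
  -- every finite initial segment of `c` lies in `Down (C m)`
  have hfinN : ∀ N : ℕ, (c ∩ Set.Iic N).Finite := fun N =>
    (Set.finite_Iic N).subset Set.inter_subset_right
  set sN : ℕ → Finset ℕ := fun N => (hfinN N).toFinset with hsN
  have hmem_sN : ∀ N i, i ∈ sN N ↔ i ∈ c ∧ i ≤ N := by
    intro N i
    simp [hsN, Set.Finite.mem_toFinset]
  obtain ⟨b0, hb0⟩ := hc_inf.nonempty
  have hseg : ∀ N, b0 ≤ N → chF (sN N) ∈ Down (C m) := by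
    intro N hN
    have hgood := hno (Encodable.encode (sN N))
    rw [Good, dec_encode] at hgood
    by_contra hK
    apply hgood
    refine ⟨⟨b0, (hmem_sN N b0).2 ⟨hb0, hN⟩⟩, ?_, ?_, ?_, hK⟩
    · intro b hb
      exact hc_gt b ((hmem_sN N b).1 hb).1
    · intro b hb
      exact hc_sub b ((hmem_sN N b).1 hb).1
    · intro b hb b' hb' hlt
      exact hc_pairs b ((hmem_sN N b).1 hb).1 b' ((hmem_sN N b').1 hb').1 hlt
  -- limit of the initial segments
  have htend : Filter.Tendsto (fun N => chF (sN N)) Filter.atTop (nhds (chS c)) := by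
    rw [tendsto_pi_nhds]
    intro i
    refine Filter.Tendsto.congr' ?_ (tendsto_const_nhds :
      Filter.Tendsto (fun _ : ℕ => chS c i) Filter.atTop (nhds (chS c i)))
    filter_upwards [Filter.eventually_ge_atTop i] with N hN
    by_cases hic : i ∈ c
    · have : i ∈ sN N := (hmem_sN N i).2 ⟨hic, hN⟩
      simp [chS, chF, hic, this]
    · have : i ∉ sN N := fun h => hic ((hmem_sN N i).1 h).1
      simp [chS, chF, hic, this]
  have hclim : chS c ∈ Down (C m) := by
    refine (down_closed (hC m)).mem_of_tendsto htend ?_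
    filter_upwards [Filter.eventually_ge_atTop b0] with N hN
    exact hseg N hN
  -- hence `x ∈ I`, contradiction
  obtain ⟨z, hzC, hzsub⟩ := hclim
  have hcI : chS c ∈ I := hI.1 z (hcov m hzC) _ hzsub
  have hpI : chS (toSet x ∩ Set.Iic n0) ∈ I := by
    refine hfin _ ?_
    rw [toSet_chS]
    exact (Set.finite_Iic n0).subset Set.inter_subset_right
  have huI : (fun n => chS c n || chS (toSet x ∩ Set.Iic n0) n) ∈ I := hI.2 _ hcI _ hpI
  apply hx1
  refine hI.1 _ huI x ?_
  rw [toSet_or, toSet_chS, toSet_chS]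
  intro n hn
  by_cases hle : n ≤ n0
  · exact Or.inr ⟨hn, hle⟩
  · exact Or.inl ⟨hn, fun h => hle h⟩

end SelUnif

/-- Every selective `Fσ` ideal on `ℕ` is uniformly selective. -/
theorem selective_fsigma_unif_selective (I : Set Cantor) (hI : IsIdeal I)
    (hFs : IsFsigma I) (hsel : Selective I) : UnifSelective I := by
  classical
  by_cases hB : ∀ k : ℕ, SelUnif.chF {k} ∈ I
  · obtain ⟨C, hC, hIC⟩ := hFs
    have hcov : ∀ m, C m ⊆ I := fun m => hIC ▸ Set.subset_iUnion C m
    have hfin : ∀ y : Cantor, (toSet y).Finite → y ∈ I := SelUnif.finite_mem hI hB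
    refine ⟨SelUnif.Fsel (fun i => Down (C i)), SelUnif.meas_Fsel _, ?_⟩
    intro xs hxs hdec
    have hGood : ∀ m, SelUnif.Good (fun i => Down (C i)) xs
        (SelUnif.endpt (fun i => Down (C i)) xs m) m
        (SelUnif.pick (fun i => Down (C i)) xs (SelUnif.endpt (fun i => Down (C i)) xs m) m) := by
      intro m
      have hne : {e | SelUnif.Good (fun i => Down (C i)) xs
          (SelUnif.endpt (fun i => Down (C i)) xs m) m e}.Nonempty :=
        SelUnif.good_exists C hI hC hcov hsel hfin xs hxs hdec _ m
      exact Nat.sInf_mem hne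
    have hub : ∀ m, ∀ b ∈ SelUnif.dec (SelUnif.pick (fun i => Down (C i)) xs
        (SelUnif.endpt (fun i => Down (C i)) xs m) m),
        b ≤ SelUnif.endpt (fun i => Down (C i)) xs (m+1) := by
      intro m b hb
      show b ≤ (if h : (SelUnif.dec (SelUnif.pick (fun i => Down (C i)) xs
          (SelUnif.endpt (fun i => Down (C i)) xs m) m)).Nonempty
        then (SelUnif.dec (SelUnif.pick (fun i => Down (C i)) xs
          (SelUnif.endpt (fun i => Down (C i)) xs m) m)).max' h else 0).max
          (SelUnif.endpt (fun i => Down (C i)) xs m + 1)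
      rw [dif_pos (hGood m).1]
      exact le_max_of_le_left (Finset.le_max' _ b hb)
    have hmono : Monotone (SelUnif.endpt (fun i => Down (C i)) xs) := by
      apply monotone_nat_of_le_succ
      intro m
      show SelUnif.endpt (fun i => Down (C i)) xs m ≤
        (if h : (SelUnif.dec (SelUnif.pick (fun i => Down (C i)) xs
          (SelUnif.endpt (fun i => Down (C i)) xs m) m)).Nonempty
        then (SelUnif.dec (SelUnif.pick (fun i => Down (C i)) xs
          (SelUnif.endpt (fun i => Down (C i)) xs m) m)).max' h else 0).max
          (SelUnif.endpt (fun i => Down (C i)) xs m + 1)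
      exact le_trans (Nat.le_succ _) (le_max_right _ _)
    constructor
    · intro hmem
      rw [hIC, Set.mem_iUnion] at hmem
      obtain ⟨m, hm⟩ := hmem
      apply (hGood m).2.2.2.2
      refine ⟨SelUnif.Fsel (fun i => Down (C i)) xs, hm, ?_⟩
      rw [SelUnif.toSet_chF]
      intro b hb
      exact (SelUnif.Fsel_eq_true _ xs b).2 ⟨m, Finset.mem_coe.mp hb⟩
    · intro n hn b hb
      obtain ⟨hbF, hbn⟩ := hb
      have hlt : n < b := by
        simp only [Set.mem_Iic] at hbn; omega
      obtain ⟨m, hms⟩ := (SelUnif.Fsel_eq_true _ xs n).1 hn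
      obtain ⟨m', hms'⟩ := (SelUnif.Fsel_eq_true _ xs b).1 hbF
      rcases lt_trichotomy m' m with hc | hc | hc
      · exfalso
        have h1 : b ≤ SelUnif.endpt (fun i => Down (C i)) xs (m'+1) := hub m' b hms'
        have h2 : SelUnif.endpt (fun i => Down (C i)) xs (m'+1) ≤
            SelUnif.endpt (fun i => Down (C i)) xs m := hmono hc
        have h3 : SelUnif.endpt (fun i => Down (C i)) xs m < n := (hGood m).2.1 n hms
        omega
      · rw [hc] at hms'
        exact (hGood m).2.2.2.1 n hms b hms' hlt
      · have h1 : xs (SelUnif.endpt (fun i => Down (C i)) xs m') b = true :=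
          (hGood m').2.2.1 b hms'
        have h2 : n ≤ SelUnif.endpt (fun i => Down (C i)) xs m' :=
          le_trans (hub m n hms) (hmono hc)
        exact SelUnif.toSet_mono xs hdec h2 h1
  · push_neg at hB
    obtain ⟨k, hk⟩ := hB
    refine ⟨fun _ => SelUnif.chF {k}, measurable_const, ?_⟩
    intro xs hxs hdec
    refine ⟨hk, ?_⟩
    intro n hn b hb
    exfalso
    have h1 : n = k := by
      have h := hn; rw [SelUnif.toSet_chF] at h; simpa using h
    have h2 : b = k := by
      have h := hb.1; rw [SelUnif.toSet_chF] at h; simpa using h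
    have h3 := hb.2
    subst h1; subst h2
    simp at h3
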